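/- Let J_k denote Bessel functions of the first kind, I ⊂ ℤ finite, d_k ∈ ℂ for k ∈ I with d_{k_min} ≠ 0 where k_min = min{k ∈ I : d_k ≠ 0}, and define F_ℓ(r) = Σ_{k∈I} d_k J_{k+ℓ}(r). Then there exists j₀ > 0 (independent of ℓ) such that for all ℓ ≥ −k_min and all r with 0 < |r| < j₀, |F_ℓ(r)| ≥ (|d_{k_min}|/2) |J_{k_min+ℓ}(r)| > 0; in particular F_ℓ(r) ≠ 0. The proof uses the bounds |J_m(r)| ≤ (1/m!)(|r|/2)^m and, for |r| ≤ 1, |J_m(r)| ≥ |r|^m J_m(1) ≥ (|r|^m/(m! 2^m))(1 − 1/(2(m+1))) for m ≥ 0. -/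

import Mathlib

noncomputable def besselJ (k : ℤ) (r : ℝ) : ℝ :=
  ((1 / (2 * (Real.pi : ℂ))) * ∫ s in (0:ℝ)..(2 * Real.pi),
    Complex.exp (Complex.I * ((r * Real.sin s : ℝ) : ℂ) -
      Complex.I * (((k : ℝ) * s : ℝ) : ℂ))).re

theorem stmt18 (I : Finset ℤ) (d : ℤ → ℂ) (kmin : ℤ)
    (hkmem : kmin ∈ I) (hdk : d kmin ≠ 0)
    (hmin : ∀ k ∈ I, d k ≠ 0 → kmin ≤ k)
    (hub : ∀ (m : ℕ) (r : ℝ),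
      |besselJ (m : ℤ) r| ≤ (1 / (Nat.factorial m : ℝ)) * (|r| / 2) ^ m)
    (hlb : ∀ (m : ℕ) (r : ℝ), |r| ≤ 1 →
      (|r| ^ m / ((Nat.factorial m : ℝ) * 2 ^ m)) * (1 - 1 / (2 * ((m : ℝ) + 1))) ≤
        |besselJ (m : ℤ) r|) :
    ∃ j₀ > (0:ℝ), ∀ ℓ : ℤ, -kmin ≤ ℓ → ∀ r : ℝ, 0 < |r| → |r| < j₀ →
      (‖d kmin‖ / 2) * |besselJ (kmin + ℓ) r| ≤
        ‖∑ k ∈ I, d k * ((besselJ (k + ℓ) r : ℝ) : ℂ)‖ ∧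
      0 < (‖d kmin‖ / 2) * |besselJ (kmin + ℓ) r| := by
  classical
  set S : ℝ := ∑ k ∈ I, ‖d k‖ with hS
  have hS0 : 0 ≤ S := Finset.sum_nonneg fun _ _ => norm_nonneg _
  have hd0 : 0 < ‖d kmin‖ := norm_pos_iff.mpr hdk
  have hrest_sub : ∀ J : Finset ℤ, J ⊆ I → (∑ k ∈ J, ‖d k‖) ≤ S :=
    fun J hJ => Finset.sum_le_sum_of_subset_of_nonneg hJ (fun _ _ _ => norm_nonneg _)
  clear_value S
  refine ⟨min 1 (‖d kmin‖ / (2 * (S + 1))), by positivity, ?_⟩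
  intro ℓ hℓ r hr hrj
  have hr1 : |r| ≤ 1 := le_of_lt (lt_of_lt_of_le hrj (min_le_left _ _))
  have hrS : |r| < ‖d kmin‖ / (2 * (S + 1)) := lt_of_lt_of_le hrj (min_le_right _ _)
  have hm0 : 0 ≤ kmin + ℓ := by linarith
  set m : ℕ := (kmin + ℓ).toNat with hmdef
  have hmz : (m : ℤ) = kmin + ℓ := Int.toNat_of_nonneg hm0
  set B : ℝ := |besselJ (kmin + ℓ) r| with hB
  -- lower bound for B
  have hhalf : (1:ℝ)/2 ≤ 1 - 1 / (2 * ((m : ℝ) + 1)) := by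
    have h1 : (1:ℝ) / (2 * ((m : ℝ) + 1)) ≤ 1/2 := by
      rw [div_le_div_iff₀ (by positivity) (by norm_num)]
      have : (0:ℝ) ≤ (m : ℝ) := Nat.cast_nonneg m
      nlinarith
    linarith
  have hlow : (|r| ^ m / ((Nat.factorial m : ℝ) * 2 ^ m)) * (1/2) ≤ B := by
    have h := hlb m r hr1
    rw [hmz] at h
    refine le_trans ?_ h
    have hpos : (0:ℝ) ≤ |r| ^ m / ((Nat.factorial m : ℝ) * 2 ^ m) := by positivity
    exact mul_le_mul_of_nonneg_left hhalf hpos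
  have hBpos : 0 < B := lt_of_lt_of_le (by positivity) hlow
  -- per-term bound for k ≠ kmin
  have hterm : ∀ k ∈ I.erase kmin,
      ‖d k * ((besselJ (k + ℓ) r : ℝ) : ℂ)‖ ≤ ‖d k‖ * (|r| * B) := by
    intro k hk
    rw [Finset.mem_erase] at hk
    obtain ⟨hkne, hkI⟩ := hk
    by_cases hdz : d k = 0
    · simp only [hdz, zero_mul, norm_zero]
      positivity
    have hklt : kmin < k := lt_of_le_of_ne (hmin k hkI hdz) (Ne.symm hkne)
    have hn0 : 0 ≤ k + ℓ := by linarith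
    set n : ℕ := (k + ℓ).toNat with hndef
    have hnz : (n : ℤ) = k + ℓ := Int.toNat_of_nonneg hn0
    have hmn : m + 1 ≤ n := by
      have : (m : ℤ) + 1 ≤ (n : ℤ) := by rw [hmz, hnz]; linarith
      exact_mod_cast this
    have hJn : |besselJ (k + ℓ) r| ≤ |r| * B := by
      have h1 : |besselJ (k + ℓ) r| ≤ (1 / (Nat.factorial n : ℝ)) * (|r| / 2) ^ n := by
        have := hub n r; rwa [hnz] at this
      have h2 : (1 / (Nat.factorial n : ℝ)) * (|r| / 2) ^ n ≤
          (1 / (Nat.factorial m : ℝ)) * (|r| / 2) ^ (m + 1) := by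
        have hfac : (Nat.factorial m : ℝ) ≤ (Nat.factorial n : ℝ) := by
          exact_mod_cast Nat.factorial_le (le_trans (Nat.le_succ m) hmn)
        have hfpos : (0:ℝ) < (Nat.factorial m : ℝ) := by positivity
        have hle1 : |r| / 2 ≤ 1 := by linarith
        have hge0 : (0:ℝ) ≤ |r| / 2 := by positivity
        have hpow : (|r| / 2) ^ n ≤ (|r| / 2) ^ (m + 1) :=
          pow_le_pow_of_le_one hge0 hle1 hmn
        have h1n : (1:ℝ) / (Nat.factorial n : ℝ) ≤ 1 / (Nat.factorial m : ℝ) := by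
          apply one_div_le_one_div_of_le hfpos hfac
        calc (1 / (Nat.factorial n : ℝ)) * (|r| / 2) ^ n
            ≤ (1 / (Nat.factorial m : ℝ)) * (|r| / 2) ^ n := by
              apply mul_le_mul_of_nonneg_right h1n (by positivity)
          _ ≤ (1 / (Nat.factorial m : ℝ)) * (|r| / 2) ^ (m + 1) := by
              apply mul_le_mul_of_nonneg_left hpow (by positivity)
      have h3 : (1 / (Nat.factorial m : ℝ)) * (|r| / 2) ^ (m + 1) =
          |r| * ((|r| ^ m / ((Nat.factorial m : ℝ) * 2 ^ m)) * (1/2)) := by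
        rw [div_pow, pow_succ]
        have hfpos : (0:ℝ) < (Nat.factorial m : ℝ) := by positivity
        field_simp
        ring
      have h4 : |r| * ((|r| ^ m / ((Nat.factorial m : ℝ) * 2 ^ m)) * (1/2)) ≤ |r| * B :=
        mul_le_mul_of_nonneg_left hlow (abs_nonneg r)
      linarith
    rw [norm_mul, Complex.norm_real, Real.norm_eq_abs]
    exact mul_le_mul_of_nonneg_left hJn (norm_nonneg _)
  -- main estimate
  have hsplit : ∑ k ∈ I, d k * ((besselJ (k + ℓ) r : ℝ) : ℂ) =
      d kmin * ((besselJ (kmin + ℓ) r : ℝ) : ℂ) +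
        ∑ k ∈ I.erase kmin, d k * ((besselJ (k + ℓ) r : ℝ) : ℂ) :=
    (Finset.add_sum_erase I _ hkmem).symm
  have hrest : ‖∑ k ∈ I.erase kmin, d k * ((besselJ (k + ℓ) r : ℝ) : ℂ)‖ ≤
      S * (|r| * B) := by
    calc ‖∑ k ∈ I.erase kmin, d k * ((besselJ (k + ℓ) r : ℝ) : ℂ)‖
        ≤ ∑ k ∈ I.erase kmin, ‖d k * ((besselJ (k + ℓ) r : ℝ) : ℂ)‖ :=
          norm_sum_le _ _
      _ ≤ ∑ k ∈ I.erase kmin, ‖d k‖ * (|r| * B) := Finset.sum_le_sum hterm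
      _ = (∑ k ∈ I.erase kmin, ‖d k‖) * (|r| * B) := by
          rw [Finset.sum_mul]
      _ ≤ S * (|r| * B) := by
          apply mul_le_mul_of_nonneg_right _ (by positivity)
          exact hrest_sub _ (Finset.erase_subset _ _)
  have hmain : ‖d kmin‖ * B - S * (|r| * B) ≤
      ‖∑ k ∈ I, d k * ((besselJ (k + ℓ) r : ℝ) : ℂ)‖ := by
    rw [hsplit]
    have h1 : ‖d kmin * ((besselJ (kmin + ℓ) r : ℝ) : ℂ)‖ = ‖d kmin‖ * B := by
      rw [norm_mul, Complex.norm_real, Real.norm_eq_abs]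
    have h2 := norm_sub_norm_le (d kmin * ((besselJ (kmin + ℓ) r : ℝ) : ℂ))
        (-(∑ k ∈ I.erase kmin, d k * ((besselJ (k + ℓ) r : ℝ) : ℂ)))
    simp only [norm_neg, sub_neg_eq_add] at h2
    linarith
  have hrSmul : S * |r| ≤ ‖d kmin‖ / 2 := by
    rw [lt_div_iff₀ (by positivity)] at hrS
    nlinarith [abs_nonneg r]
  constructor
  · have : (‖d kmin‖ / 2) * B ≤ ‖d kmin‖ * B - S * (|r| * B) := by
      nlinarith [hBpos.le]
    linarith
  · positivity
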